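/- For every m ∈ ℕ, the complete homogeneous symmetric polynomial h_m in n variables equals the determinant det(σ_{j−i+1})_{1≤i,j≤m}, where σ_k are the elementary symmetric polynomials (with σ_k = 0 for k > n or k < 0, and σ_0 = 1). -/

import Mathlib

set_option maxRecDepth 4000

open Finset PowerSeries

noncomputable def ee {n : ℕ} (x : Fin n → ℝ) (k : ℕ) : ℝ :=
  ∑ s ∈ Finset.univ.powersetCard k, ∏ i ∈ s, x i

noncomputable def hh {n : ℕ} (x : Fin n → ℝ) (m : ℕ) : ℝ :=
  ∑ μ ∈ Finset.Nat.antidiagonalTuple n m, ∏ i, x i ^ μ i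

lemma coeff_prod_mk {n : ℕ} (f : Fin n → ℕ → ℝ) (d : ℕ) :
    (PowerSeries.coeff d) (∏ i, PowerSeries.mk (f i)) =
      ∑ μ ∈ Finset.Nat.antidiagonalTuple n d, ∏ i, f i (μ i) := by
  rw [PowerSeries.coeff_prod]
  refine Finset.sum_nbij' (fun l => (l : Fin n → ℕ)) (fun μ => Finsupp.equivFunOnFinite.symm μ)
    ?_ ?_ ?_ ?_ ?_
  · intro l hl
    simp only [Finset.mem_finsuppAntidiag] at hl
    simp only [Finset.Nat.mem_antidiagonalTuple]
    exact hl.1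
  · intro μ hμ
    simp only [Finset.Nat.mem_antidiagonalTuple] at hμ
    simp only [Finset.mem_finsuppAntidiag]
    exact ⟨hμ, Finset.subset_univ _⟩
  · intro l _; exact Finsupp.equivFunOnFinite.symm_apply_apply l
  · intro μ _; rfl
  · intro l _
    exact Finset.prod_congr rfl fun i _ => by rw [PowerSeries.coeff_mk]

lemma geom_mul (c : ℝ) :
    PowerSeries.mk (fun k => if k = 0 then (1:ℝ) else if k = 1 then -c else 0) *
      PowerSeries.mk (fun k => c ^ k) = 1 := by
  ext k
  rw [PowerSeries.coeff_mul, Finset.Nat.sum_antidiagonal_eq_sum_range_succ_mk]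
  cases k with
  | zero => simp
  | succ k =>
    rw [Finset.sum_range_succ', Finset.sum_range_succ']
    simp [pow_succ, mul_comm]

lemma coeff_E {n : ℕ} (x : Fin n → ℝ) (a : ℕ) :
    (∑ μ ∈ Finset.Nat.antidiagonalTuple n a,
        ∏ i, (if μ i = 0 then (1:ℝ) else if μ i = 1 then -x i else 0))
      = (-1)^a * ee x a := by
  classical
  rw [← Finset.sum_filter_add_sum_filter_not _ (fun μ => ∀ i, μ i ≤ 1)]
  have h2 : ∑ μ ∈ (Finset.Nat.antidiagonalTuple n a).filter (fun μ => ¬ ∀ i, μ i ≤ 1),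
      ∏ i, (if μ i = 0 then (1:ℝ) else if μ i = 1 then -x i else 0) = 0 := by
    refine Finset.sum_eq_zero fun μ hμ => ?_
    simp only [Finset.mem_filter, not_forall, not_le] at hμ
    obtain ⟨i, hi⟩ := hμ.2
    refine Finset.prod_eq_zero (Finset.mem_univ i) ?_
    rw [if_neg (by omega), if_neg (by omega)]
  rw [h2, add_zero, ee, Finset.mul_sum]
  refine Finset.sum_nbij' (fun μ => Finset.univ.filter (fun i => μ i = 1))
    (fun s => fun i => if i ∈ s then 1 else 0) ?_ ?_ ?_ ?_ ?_
  · intro μ hμ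
    simp only [Finset.mem_filter, Finset.Nat.mem_antidiagonalTuple] at hμ
    simp only [Finset.mem_powersetCard_univ]
    rw [Finset.card_filter]
    rw [← hμ.1]
    refine Finset.sum_congr rfl fun i _ => ?_
    have := hμ.2 i
    split <;> omega
  · intro s hs
    simp only [Finset.mem_powersetCard_univ] at hs
    simp only [Finset.mem_filter, Finset.Nat.mem_antidiagonalTuple]
    constructor
    · rw [← hs, Finset.card_eq_sum_ones s, Finset.sum_ite_mem, Finset.univ_inter]
    · intro i; split <;> omega
  · intro μ hμ
    simp only [Finset.mem_filter, Finset.Nat.mem_antidiagonalTuple] at hμ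
    funext i
    simp only [Finset.mem_filter, Finset.mem_univ, true_and]
    have := hμ.2 i
    split <;> omega
  · intro s hs
    ext i
    simp
  · intro μ hμ
    simp only [Finset.mem_filter, Finset.Nat.mem_antidiagonalTuple] at hμ
    have hc : ((Finset.univ.filter (fun i => μ i = 1)).card = a) := by
      rw [Finset.card_filter, ← hμ.1]
      refine Finset.sum_congr rfl fun i _ => ?_
      have := hμ.2 i
      split <;> omega
    calc ∏ i, (if μ i = 0 then (1:ℝ) else if μ i = 1 then -x i else 0)
        = ∏ i ∈ Finset.univ.filter (fun i => μ i = 1), (-x i) := by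
          rw [Finset.prod_filter]
          refine Finset.prod_congr rfl fun i _ => ?_
          have := hμ.2 i
          rcases Nat.lt_or_ge (μ i) 1 with h | h
          · rw [if_pos (by omega), if_neg (by omega)]
          · rw [if_neg (by omega), if_pos (by omega), if_pos (by omega)]
      _ = (-1)^a * ∏ i ∈ Finset.univ.filter (fun i => μ i = 1), x i := by
          rw [← hc, ← Finset.prod_const (-1:ℝ), ← Finset.prod_mul_distrib]
          exact Finset.prod_congr rfl fun i _ => by ring

lemma key {n : ℕ} (x : Fin n → ℝ) (N : ℕ) (hN : N ≠ 0) :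
    ∑ k ∈ Finset.range (N + 1), (-1:ℝ)^k * ee x k * hh x (N - k) = 0 := by
  have hprod : (∏ i : Fin n,
        PowerSeries.mk (fun k => if k = 0 then (1:ℝ) else if k = 1 then -x i else 0)) *
      (∏ i : Fin n, PowerSeries.mk (fun k => x i ^ k)) = 1 := by
    rw [← Finset.prod_mul_distrib]
    rw [Finset.prod_congr rfl fun i _ => geom_mul (x i)]
    exact Finset.prod_const_one
  have h0 := congrArg (PowerSeries.coeff (R := ℝ) N) hprod
  rw [PowerSeries.coeff_mul, Finset.Nat.sum_antidiagonal_eq_sum_range_succ_mk,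
    PowerSeries.coeff_one, if_neg hN] at h0
  rw [← h0]
  refine Finset.sum_congr rfl fun k hk => ?_
  rw [coeff_prod_mk, coeff_prod_mk]
  rw [coeff_E]
  rfl

lemma ee_zero {n : ℕ} (x : Fin n → ℝ) : ee x 0 = 1 := by simp [ee]

lemma hh_zero {n : ℕ} (x : Fin n → ℝ) : hh x 0 = 1 := by
  simp [hh, Finset.Nat.antidiagonalTuple_zero_right]

lemma sign_split (a : ℕ) : (-1:ℝ)^a * (-1:ℝ)^a = 1 := by
  rw [← pow_add, ← two_mul, pow_mul]
  norm_num

lemma sum_aux {n : ℕ} (x : Fin n → ℝ) (m ni nj : ℕ) (hi : ni < m) (hj : nj < m) :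
    ∑ k ∈ Finset.range m, (if ni ≤ k+1 then ee x (k+1-ni) else 0) *
      (if k ≤ nj then (-1:ℝ)^(nj-k) * hh x (nj-k) else 0) =
    if ni = 0 then (-1:ℝ)^nj * hh x (nj+1) else if nj+1 = ni then 1 else 0 := by
  rcases Nat.eq_zero_or_pos ni with hni | hni
  · -- first row
    subst hni
    rw [if_pos rfl]
    rw [← Finset.sum_subset (Finset.range_subset_range.2 hj) (fun k _ hk => by
      rw [if_neg (show ¬ k ≤ nj by simp at hk; omega), mul_zero])]
    have hkey := key x (nj+1) (Nat.succ_ne_zero nj)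
    rw [Finset.sum_range_succ'] at hkey
    simp only [pow_zero, ee_zero, one_mul, Nat.sub_zero] at hkey
    -- hkey : ∑ k ∈ range (nj+1), (-1)^(k+1) * ee x (k+1) * hh x (nj+1-(k+1)) + hh x (nj+1) = 0
    have hs : ∀ k ∈ Finset.range (nj+1),
        (if 0 ≤ k+1 then ee x (k+1-0) else 0) *
          (if k ≤ nj then (-1:ℝ)^(nj-k) * hh x (nj-k) else 0)
        = (-1:ℝ)^nj * (-((-1:ℝ)^(k+1) * ee x (k+1) * hh x (nj+1-(k+1)))) := by
      intro k hk
      simp only [Finset.mem_range] at hk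
      rw [if_pos (Nat.zero_le _), if_pos (by omega), Nat.sub_zero]
      have h1 : nj + 1 - (k+1) = nj - k := by omega
      have h2 : (-1:ℝ)^(nj-k) = (-1:ℝ)^nj * (-(-1:ℝ)^(k+1)) := by
        have h3 : nj = (nj - k) + k := by omega
        calc (-1:ℝ)^(nj-k) = (-1:ℝ)^(nj-k) * ((-1:ℝ)^k * (-1:ℝ)^k) := by
              rw [sign_split, mul_one]
          _ = ((-1:ℝ)^(nj-k) * (-1:ℝ)^k) * (-1:ℝ)^k := by ring
          _ = (-1:ℝ)^nj * (-(-1:ℝ)^(k+1)) := by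
              have h5 : nj - k + k = nj := by omega
              rw [← pow_add, h5, pow_succ]; ring
      rw [h1, h2]
      ring
    rw [Finset.sum_congr rfl hs, ← Finset.mul_sum]
    have hsum : ∑ k ∈ Finset.range (nj+1),
        -((-1:ℝ)^(k+1) * ee x (k+1) * hh x (nj+1-(k+1))) = hh x (nj+1) := by
      rw [Finset.sum_neg_distrib]; linarith [hkey]
    rw [hsum]
  · rw [if_neg (by omega)]
    rcases Nat.lt_or_ge nj (ni - 1) with hlt | hge
    · -- nj + 1 < ni : zero
      rw [if_neg (by omega)]
      refine Finset.sum_eq_zero fun k hk => ?_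
      rcases le_or_gt k nj with h | h
      · rw [if_neg (show ¬ ni ≤ k + 1 by omega), zero_mul]
      · rw [if_neg (show ¬ k ≤ nj by omega), mul_zero]
    rcases Nat.eq_or_lt_of_le hge with heq | hgt
    · -- nj + 1 = ni : single term 1
      rw [if_pos (by omega)]
      rw [Finset.sum_eq_single nj (fun k hk hne => by
        rcases Nat.lt_or_ge k nj with h | h
        · rw [if_neg (show ¬ ni ≤ k + 1 by omega), zero_mul]
        · rw [if_neg (show ¬ k ≤ nj by omega), mul_zero]) (fun h => absurd (Finset.mem_range.2 hj) h)]
      rw [if_pos (by omega), if_pos le_rfl]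
      have : nj + 1 - ni = 0 := by omega
      rw [this, Nat.sub_self, ee_zero, hh_zero]
      norm_num
    · -- nj ≥ ni : sum is zero by key identity
      rw [if_neg (by omega)]
      set N := nj + 1 - ni with hN
      have hN1 : 1 ≤ N := by omega
      rw [← Finset.sum_subset (show Finset.Ico (ni-1) (nj+1) ⊆ Finset.range m from fun k hk => by
          simp only [Finset.mem_Ico] at hk; exact Finset.mem_range.2 (by omega))
        (fun k hk hk2 => by
          simp only [Finset.mem_Ico, not_and_or, not_le, not_lt] at hk2
          rcases hk2 with h | h
          · rw [if_neg (show ¬ ni ≤ k + 1 by omega), zero_mul]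
          · rw [if_neg (show ¬ k ≤ nj by omega), mul_zero])]
      rw [Finset.sum_Ico_eq_sum_range]
      have hrange : nj + 1 - (ni - 1) = N + 1 := by omega
      rw [hrange]
      have hs : ∀ a ∈ Finset.range (N+1),
          (if ni ≤ (ni-1+a)+1 then ee x ((ni-1+a)+1-ni) else 0) *
            (if ni-1+a ≤ nj then (-1:ℝ)^(nj-(ni-1+a)) * hh x (nj-(ni-1+a)) else 0)
          = (-1:ℝ)^N * ((-1:ℝ)^a * ee x a * hh x (N-a)) := by
        intro a ha
        simp only [Finset.mem_range] at ha
        rw [if_pos (by omega), if_pos (by omega)]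
        have h1 : (ni-1+a)+1-ni = a := by omega
        have h2 : nj - (ni-1+a) = N - a := by omega
        have h3 : (-1:ℝ)^(N-a) = (-1:ℝ)^N * (-1:ℝ)^a := by
          have h4 : N = (N - a) + a := by omega
          calc (-1:ℝ)^(N-a) = (-1:ℝ)^(N-a) * ((-1:ℝ)^a * (-1:ℝ)^a) := by
                rw [sign_split, mul_one]
            _ = ((-1:ℝ)^(N-a) * (-1:ℝ)^a) * (-1:ℝ)^a := by ring
            _ = (-1:ℝ)^N * (-1:ℝ)^a := by rw [← pow_add, ← h4]
        rw [h1, h2, h3]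
        ring
      rw [Finset.sum_congr rfl hs, ← Finset.mul_sum, key x N (by omega), mul_zero]

lemma detM {n : ℕ} (x : Fin n → ℝ) (m : ℕ) :
    (Matrix.of fun i j : Fin m =>
      if (i:ℕ) = 0 then (-1:ℝ)^(j:ℕ) * hh x ((j:ℕ)+1)
      else if (j:ℕ)+1 = (i:ℕ) then 1 else 0).det = hh x m := by
  cases m with
  | zero => simp [hh_zero]
  | succ m' =>
    rw [Matrix.det_succ_column _ (Fin.last m')]
    rw [Finset.sum_eq_single 0 (fun i _ hne => by
        rw [Matrix.of_apply, if_neg (by intro h; exact hne (Fin.ext h)),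
          if_neg (show ¬ ((Fin.last m' : ℕ) + 1 = (i:ℕ)) by
            have := i.isLt; simp only [Fin.val_last]; omega)]
        ring) (fun h => absurd (Finset.mem_univ _) h)]
    have hsub : ((Matrix.of fun i j : Fin (m'+1) =>
        if (i:ℕ) = 0 then (-1:ℝ)^(j:ℕ) * hh x ((j:ℕ)+1)
        else if (j:ℕ)+1 = (i:ℕ) then 1 else 0).submatrix
          (Fin.succAbove 0) (Fin.succAbove (Fin.last m'))) = 1 := by
      ext r c
      simp only [Matrix.submatrix_apply, Matrix.of_apply, Matrix.one_apply]
      have h1 : ((Fin.succAbove 0 r : Fin (m'+1)) : ℕ) = (r:ℕ) + 1 := by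
        simp [Fin.succAbove]
      have h2 : ((Fin.succAbove (Fin.last m') c : Fin (m'+1)) : ℕ) = (c:ℕ) := by
        simp [Fin.succAbove, Fin.castSucc_lt_last]
      rw [h1, h2, if_neg (by omega)]
      by_cases h : r = c
      · subst h; rw [if_pos rfl, if_pos rfl]
      · rw [if_neg (by simp [Fin.ext_iff] at h ⊢; omega), if_neg h]
    rw [hsub, Matrix.det_one]
    simp only [Matrix.of_apply, Fin.val_zero, Fin.val_last]
    rw [if_pos trivial, mul_one, zero_add, ← mul_assoc, sign_split, one_mul]

theorem stmt_7 (n m : ℕ) (x : Fin n → ℝ) :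
    (∑ μ ∈ Finset.Nat.antidiagonalTuple n m, ∏ i, x i ^ μ i) =
      Matrix.det (fun i j : Fin m =>
        if (i : ℕ) ≤ (j : ℕ) + 1 then
          ∑ s ∈ Finset.univ.powersetCard ((j : ℕ) + 1 - (i : ℕ)), ∏ i ∈ s, x i
        else 0) := by
  classical
  set A : Matrix (Fin m) (Fin m) ℝ := Matrix.of fun i j =>
    if (i:ℕ) ≤ (j:ℕ)+1 then ee x ((j:ℕ)+1-(i:ℕ)) else 0 with hA
  set T : Matrix (Fin m) (Fin m) ℝ := Matrix.of fun i j =>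
    if (i:ℕ) ≤ (j:ℕ) then (-1:ℝ)^((j:ℕ)-(i:ℕ)) * hh x ((j:ℕ)-(i:ℕ)) else 0 with hT'
  have hT : T.det = 1 := by
    have htri : T.BlockTriangular id := fun i j hij => by
      simp only [hT', Matrix.of_apply]
      rw [if_neg (by simp [id] at hij; omega)]
    rw [Matrix.det_of_upperTriangular htri]
    refine Finset.prod_eq_one fun i _ => ?_
    simp [hT', hh_zero]
  have hM : A * T = Matrix.of fun i j : Fin m =>
      if (i:ℕ) = 0 then (-1:ℝ)^(j:ℕ) * hh x ((j:ℕ)+1)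
      else if (j:ℕ)+1 = (i:ℕ) then 1 else 0 := by
    ext i j
    rw [Matrix.mul_apply]
    simp only [hA, hT', Matrix.of_apply]
    rw [Fin.sum_univ_eq_sum_range (fun k => (if (i:ℕ) ≤ k+1 then ee x (k+1-(i:ℕ)) else 0) *
      (if k ≤ (j:ℕ) then (-1:ℝ)^((j:ℕ)-k) * hh x ((j:ℕ)-k) else 0)) m]
    exact sum_aux x m i j i.isLt j.isLt
  have hdet : A.det = hh x m := by
    have := congrArg Matrix.det hM
    rw [Matrix.det_mul, hT, mul_one] at this
    rw [this, detM]
  have hstmt : Matrix.det (fun i j : Fin m =>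
      if (i : ℕ) ≤ (j : ℕ) + 1 then
        ∑ s ∈ Finset.univ.powersetCard ((j : ℕ) + 1 - (i : ℕ)), ∏ i ∈ s, x i
      else 0) = A.det := rfl
  rw [hstmt, hdet]
  rfl
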